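/- Let T > 0 and let f : AddCircle T → ℂ be essentially bounded, with Fourier coefficients a(k) := fourierCoeff f k. Then the semi-infinite Hankel matrix H(a⁺) with entries H(a⁺)_{i,k} := a(i+k+1) for i, k ∈ ℕ satisfies ‖H(a⁺)‖ ≤ ‖f‖_∞ as an operator on ℓ²(ℕ): for every square-summable x : ℕ → ℂ, Σ_{i∈ℕ} |Σ_{k∈ℕ} a(i+k+1)·x(k)|² ≤ ‖f‖_∞² · Σ_{k∈ℕ} |x(k)|². -/

import Mathlib

open MeasureTheory

section Aux

variable {T : ℝ} [hT : Fact (0 < T)]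

private lemma fourierCoeff_congr_ae' {g h : AddCircle T → ℂ}
    (H : g =ᵐ[AddCircle.haarAddCircle] h) (n : ℤ) : fourierCoeff g n = fourierCoeff h n := by
  unfold fourierCoeff
  exact integral_congr_ae (H.mono fun t ht => by dsimp only; rw [ht])

end Aux

/-- The semi-infinite Hankel matrix `H(a⁺)`, with entries `a(i+k+1)` for `i, k ∈ ℕ` built from the
Fourier coefficients of an essentially bounded `f`, satisfies `‖H(a⁺)‖ ≤ ‖f‖_∞` on `ℓ²(ℕ)`. -/
theorem hankel_opNorm_le
    (T : ℝ) [hT : Fact (0 < T)] (f : AddCircle T → ℂ)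
    (hf : MemLp f ⊤ AddCircle.haarAddCircle) :
    ∀ x : ℕ → ℂ, Summable (fun k => ‖x k‖ ^ 2) →
      ∑' i : ℕ, ‖∑' k : ℕ, fourierCoeff f ((i : ℤ) + (k : ℤ) + 1) * x k‖ ^ 2
        ≤ (eLpNorm f ⊤ AddCircle.haarAddCircle).toReal ^ 2 * ∑' k : ℕ, ‖x k‖ ^ 2 := by
  intro x hx
  set μ : Measure (AddCircle T) := AddCircle.haarAddCircle with hμdef
  -- the injection `e k = -(k+1)` of ℕ into ℤ
  set e : ℕ → ℤ := fun k => -(k : ℤ) - 1 with he_def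
  have he : Function.Injective e := by
    intro a b hab
    simp only [he_def] at hab
    omega
  -- the ℓ² sequence `y` supported on negative integers
  set y : ℤ → ℂ := Function.extend e x 0 with hy_def
  have hy_apply : ∀ k : ℕ, y (e k) = x k := fun k => by
    simp only [hy_def]; exact he.extend_apply _ _ _
  have hy_zero : ∀ n : ℤ, n ∉ Set.range e → y n = 0 := by
    intro n hn
    exact Function.extend_apply' x (0 : ℤ → ℂ) n (by simpa [Set.range] using hn)
  have hysq : Summable fun n : ℤ => ‖y n‖ ^ 2 := by
    refine (he.summable_iff ?_).1 ?_
    · intro n hn; rw [hy_zero n hn]; simp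
    · have : (fun n : ℤ => ‖y n‖ ^ 2) ∘ e = fun k : ℕ => ‖x k‖ ^ 2 :=
        funext fun k => by simp [Function.comp, hy_apply k]
      rw [this]; exact hx
  have hy : Memℓp y 2 := by
    apply memℓp_gen
    have h2 : ((2 : ENNReal).toReal) = ((2 : ℕ) : ℝ) := by norm_num
    rw [h2]
    simp_rw [Real.rpow_natCast]
    exact_mod_cast hysq
  set Y : lp (fun _ : ℤ => ℂ) 2 := ⟨y, hy⟩ with hY_def
  set U : Lp ℂ 2 μ := (fourierBasis (T := T)).repr.symm Y with hU_def
  have hreprU : (fourierBasis (T := T)).repr U = Y := by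
    simp [hU_def]
  -- `U` is the sum of `x k • e_{-(k+1)}`
  have hUsum : HasSum (fun k : ℕ => x k • fourierLp 2 (e k)) U := by
    have h1 := (fourierBasis (T := T)).hasSum_repr U
    rw [hreprU] at h1
    have hcoe : ∀ n : ℤ, (fourierBasis (T := T)) n = fourierLp 2 n := fun n => by
      rw [coe_fourierBasis]
    have h1' : HasSum (fun n : ℤ => y n • fourierLp 2 n) U := by
      have heq : (fun n : ℤ => y n • fourierLp (T := T) 2 n)
          = fun n : ℤ => (Y : ∀ _ : ℤ, ℂ) n • (fourierBasis (T := T)) n :=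
        funext fun n => by rw [hcoe n]
      rw [heq]; exact h1
    have h2 := (he.hasSum_iff (a := U) (f := fun n : ℤ => y n • fourierLp (T := T) 2 n) ?_).2 h1'
    · have heq2 : ((fun n : ℤ => y n • fourierLp (T := T) 2 n) ∘ e)
          = fun k : ℕ => x k • fourierLp 2 (e k) :=
        funext fun k => by simp only [Function.comp_apply, hy_apply k]
      rw [heq2] at h2; exact h2
    · intro n hn; rw [hy_zero n hn, zero_smul]
  -- `f * U` is in L²
  have hfU : MemLp (fun t => f t * (U : AddCircle T → ℂ) t) 2 μ := by
    have hpqr : (1 : ENNReal) / 2 = 1 / ⊤ + 1 / 2 := by simp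
    have h := (Lp.memLp U).smul (r := 2) hf
    have : f • ((U : AddCircle T → ℂ)) = fun t => f t * (U : AddCircle T → ℂ) t := rfl
    rwa [this] at h
  set G : Lp ℂ 2 μ := hfU.toLp _ with hG_def
  have hreprG : ∀ n : ℤ, fourierBasis.repr G n
      = fourierCoeff (fun t => f t * (U : AddCircle T → ℂ) t) n := by
    intro n
    rw [fourierBasis_repr]
    exact fourierCoeff_congr_ae' (hfU.coeFn_toLp) n
  -- the row sums: `∑ₖ a (i + k + 1) * x k` is the `i`-th Fourier coefficient of `f * U`
  have hrow : ∀ i : ℕ, HasSum (fun k : ℕ => fourierCoeff f ((i : ℤ) + (k : ℤ) + 1) * x k)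
      (fourierBasis.repr G (i : ℤ)) := by
    intro i
    -- the test function `w = conj f * fourier i`
    set w : AddCircle T → ℂ := fun t => (starRingEnd ℂ) (f t) * fourier (i : ℤ) t with hw_def
    have hw_meas : AEStronglyMeasurable w μ :=
      (Complex.continuous_conj.comp_aestronglyMeasurable hf.1).mul
        (map_continuous (fourier (i : ℤ))).aestronglyMeasurable
    have hw_top : MemLp w ⊤ μ := by
      refine hf.of_le hw_meas (Filter.Eventually.of_forall fun t => ?_)
      have h1 : ‖(fourier (i : ℤ)) t‖ = 1 := Circle.norm_coe _
      calc ‖w t‖ = ‖f t‖ * 1 := by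
            rw [show w t = (starRingEnd ℂ) (f t) * fourier (i : ℤ) t from rfl,
              norm_mul, RCLike.norm_conj, h1]
        _ ≤ ‖f t‖ := by simp
    have hw2 : MemLp w 2 μ := hw_top.mono_exponent le_top
    set W : Lp ℂ 2 μ := hw2.toLp w with hW_def
    have hW : ∀ v : Lp ℂ 2 μ,
        (inner ℂ W v : ℂ) = fourierCoeff (fun t => f t * (v : AddCircle T → ℂ) t) (i : ℤ) := by
      intro v
      rw [MeasureTheory.L2.inner_def]
      unfold fourierCoeff
      apply integral_congr_ae
      filter_upwards [hw2.coeFn_toLp] with t ht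
      rw [ht]
      simp only [hw_def, RCLike.inner_apply, map_mul, RingHomCompTriple.comp_apply,
        Complex.conj_conj, smul_eq_mul]
      rw [fourier_neg]
      simp only [RingHom.id_apply]
      ring
    have hWV : ∀ k : ℕ, (inner ℂ W (fourierLp 2 (e k)) : ℂ)
        = fourierCoeff f ((i : ℤ) + (k : ℤ) + 1) := by
      intro k
      rw [hW]
      have hcongr : (fun t => f t * ((fourierLp (T := T) 2 (e k)) : AddCircle T → ℂ) t)
          =ᵐ[μ] fun t => fourier (e k) t * f t := by
        filter_upwards [coeFn_fourierLp (T := T) 2 (e k)] with t ht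
        rw [ht]; ring
      rw [fourierCoeff_congr_ae' hcongr]
      unfold fourierCoeff
      apply integral_congr_ae
      refine Filter.Eventually.of_forall fun t => ?_
      dsimp only
      rw [show (-((i : ℤ) + (k : ℤ) + 1)) = (-(i : ℤ)) + e k by simp only [he_def]; ring,
        fourier_add]
      simp only [smul_eq_mul]
      ring
    -- apply the continuous functional `⟪W, ·⟫` to the series defining `U`
    have h3 := hUsum.mapL (innerSL ℂ W)
    have h4 : HasSum (fun k : ℕ => fourierCoeff f ((i : ℤ) + (k : ℤ) + 1) * x k)
        (inner ℂ W U : ℂ) := by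
      refine h3.congr_fun fun k => ?_
      rw [innerSL_apply_apply, inner_smul_right, hWV k, mul_comm]
    rw [hW U] at h4
    rwa [hreprG]
  -- summability of the squared coefficients
  have hpow : ∀ r : ℝ, r ^ ((2 : ENNReal).toReal) = r ^ 2 := fun r => by
    rw [show ((2 : ENNReal).toReal) = ((2 : ℕ) : ℝ) by norm_num, Real.rpow_natCast]
  have hsumZ : Summable fun n : ℤ => ‖fourierBasis.repr G n‖ ^ 2 := by
    have h := Memℓp.summable (by norm_num) (lp.memℓp (fourierBasis.repr G))
    simpa [hpow] using h
  have hsumN : Summable fun i : ℕ => ‖fourierBasis.repr G ((i : ℤ))‖ ^ 2 :=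
    hsumZ.comp_injective (fun a b h => by simpa using h : Function.Injective (fun i : ℕ => (i : ℤ)))
  -- Parseval for `G`
  have hnormG : ‖G‖ ^ 2 = ∑' n : ℤ, ‖fourierBasis.repr G n‖ ^ 2 := by
    have h1 : ‖fourierBasis.repr G‖ ^ 2 = ∑' n : ℤ, ‖fourierBasis.repr G n‖ ^ 2 := by
      apply_mod_cast lp.norm_rpow_eq_tsum ?_ (fourierBasis.repr G)
      norm_num
    rw [← h1]
    simp
  -- the norm of `U`
  have hnormU : ‖U‖ ^ 2 = ∑' k : ℕ, ‖x k‖ ^ 2 := by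
    have h1 : ‖Y‖ ^ 2 = ∑' n : ℤ, ‖y n‖ ^ 2 := by
      apply_mod_cast lp.norm_rpow_eq_tsum ?_ Y
      norm_num
    have h2 : ‖U‖ = ‖Y‖ := by rw [hU_def]; exact LinearIsometryEquiv.norm_map _ _
    have h3 : ∑' n : ℤ, ‖y n‖ ^ 2 = ∑' k : ℕ, ‖x k‖ ^ 2 := by
      rw [← he.tsum_eq ?_]
      · exact tsum_congr fun k => by rw [hy_apply k]
      · intro n hn
        simp only [Function.mem_support] at hn
        by_contra hr
        exact hn (by rw [hy_zero n hr]; simp)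
    rw [h2, h1, h3]
  -- the operator bound
  have hG_le : ‖G‖ ≤ (eLpNorm f ⊤ μ).toReal * ‖U‖ := by
    rw [hG_def, Lp.norm_toLp]
    have hle : eLpNorm (fun t => f t * (U : AddCircle T → ℂ) t) 2 μ
        ≤ eLpNorm f ⊤ μ * eLpNorm (U : AddCircle T → ℂ) 2 μ := by
      have h := eLpNorm_smul_le_eLpNorm_top_mul_eLpNorm (μ := μ) (𝕜 := ℂ) 2
        (Lp.aestronglyMeasurable U) f
      simpa [Pi.mul_def] using h
    have hfin : eLpNorm f ⊤ μ * eLpNorm (U : AddCircle T → ℂ) 2 μ ≠ ⊤ :=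
      ENNReal.mul_ne_top hf.2.ne (Lp.memLp U).2.ne
    calc (eLpNorm (fun t => f t * (U : AddCircle T → ℂ) t) 2 μ).toReal
        ≤ (eLpNorm f ⊤ μ * eLpNorm (U : AddCircle T → ℂ) 2 μ).toReal :=
          ENNReal.toReal_mono hfin hle
      _ = (eLpNorm f ⊤ μ).toReal * ‖U‖ := by rw [ENNReal.toReal_mul, Lp.norm_def]
  calc ∑' i : ℕ, ‖∑' k : ℕ, fourierCoeff f ((i : ℤ) + (k : ℤ) + 1) * x k‖ ^ 2
      = ∑' i : ℕ, ‖fourierBasis.repr G ((i : ℤ))‖ ^ 2 :=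
        tsum_congr fun i => by rw [(hrow i).tsum_eq]
    _ ≤ ∑' n : ℤ, ‖fourierBasis.repr G n‖ ^ 2 :=
        hsumN.tsum_le_tsum_of_inj (fun i : ℕ => (i : ℤ)) (fun a b h => by simpa using h : Function.Injective (fun i : ℕ => (i : ℤ)))
          (fun c _ => by positivity) (fun i => le_rfl) hsumZ
    _ = ‖G‖ ^ 2 := hnormG.symm
    _ ≤ ((eLpNorm f ⊤ μ).toReal * ‖U‖) ^ 2 := by
        apply pow_le_pow_left₀ (norm_nonneg G) hG_le
    _ = (eLpNorm f ⊤ μ).toReal ^ 2 * ∑' k : ℕ, ‖x k‖ ^ 2 := by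
        rw [mul_pow, hnormU]
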